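/- Let G be a group and k a commutative ring. The strictly autopoietic cochains AP(k[G]^{⊗*}) form a subcomplex of the Hochschild cochain complex (Hom_k(k[G]^{⊗*}, k[G]), δ), and its cohomology is naturally isomorphic to the group cohomology H^*(G; k) (equivalently, the simplicial cohomology H^*(BG; k) of the classifying space), for G finite or infinite. -/

import Mathlib

open MonoidAlgebra

variable {k G : Type} [CommRing k] [Group G]

/-- Hochschild cochains on the group ring, modeled by values on basis tuples;
this is `Hom_k(k[G]^{⊗n}, k[G])`. -/
abbrev GCochain (k G : Type) [CommRing k] [Group G] (n : ℕ) : Type :=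
  (Fin n → G) → MonoidAlgebra k G

/-- Merge the `i`-th and `(i+1)`-st entries of a tuple. -/
def gmerge {n : ℕ} (g : Fin (n + 1) → G) (i : Fin n) : Fin n → G := fun j =>
  if (j : ℕ) < i then g j.castSucc
  else if (j : ℕ) = i then g j.castSucc * g j.succ
  else g j.succ

/-- The Hochschild coboundary
`(δf)(g_1,…,g_{n+1}) = g_1 f(g_2,…,g_{n+1}) + Σ_{i=1}^{n} (-1)^i f(g_1,…,g_i g_{i+1},…,g_{n+1})
  + (-1)^{n+1} f(g_1,…,g_n) g_{n+1}`. -/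
noncomputable def gdelta (k G : Type) [CommRing k] [Group G] (n : ℕ) :
    GCochain k G n →ₗ[k] GCochain k G (n + 1) :=
  (LinearMap.pi fun g =>
      (LinearMap.mulLeft k (single (g 0) (1 : k))).comp (LinearMap.proj (Fin.tail g)))
  + (∑ i : Fin n, ((-1 : k) ^ ((i : ℕ) + 1)) •
      LinearMap.pi fun g => LinearMap.proj (gmerge g i))
  + ((-1 : k) ^ (n + 1)) •
      LinearMap.pi fun g =>
        (LinearMap.mulRight k (single (g (Fin.last n)) (1 : k))).comp
          (LinearMap.proj (Fin.init g))

/-- The ordered product of a tuple of group elements. -/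
def gprod {n : ℕ} (g : Fin n → G) : G := (List.ofFn g).prod

/-- A cochain is (strictly) autopoietic if `f(g_1 ⊗ ⋯ ⊗ g_n) = λ_{g_1,…,g_n}·(g_1 g_2 ⋯ g_n)`
(in degree `0`, `f(1) = λ·e`). -/
def IsAP {n : ℕ} (f : GCochain k G n) : Prop :=
  ∀ g : Fin n → G, ∃ c : k, f g = c • single (gprod g) (1 : k)

/-- A cochain is non-autopoietic if the coefficient of `g_1 g_2 ⋯ g_n` in
`f(g_1 ⊗ ⋯ ⊗ g_n)` vanishes for every tuple (in degree `0`, the coefficient of `e`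
in `f(1)` vanishes). -/
def IsNP {n : ℕ} (f : GCochain k G n) : Prop :=
  ∀ g : Fin n → G, (f g).coeff (gprod g) = 0

/-- The submodule of (strictly) autopoietic cochains. -/
noncomputable def APsub (k G : Type) [CommRing k] [Group G] (n : ℕ) :
    Submodule k (GCochain k G n) where
  carrier := {f | IsAP f}
  add_mem' := by
    intro f f' hf hf' g
    obtain ⟨c, hc⟩ := hf g
    obtain ⟨c', hc'⟩ := hf' g
    exact ⟨c + c', by simp [hc, hc', add_smul]⟩
  zero_mem' := fun g => ⟨0, by simp⟩
  smul_mem' := by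
    intro c f hf g
    obtain ⟨c', hc'⟩ := hf g
    exact ⟨c * c', by simp [hc', mul_smul]⟩

/-- Simplicial cochains of the bar construction `B_*(G)`: `B^n = Hom_k(k[G^n], k)`. -/
abbrev BarCochain (k G : Type) [CommRing k] [Group G] (n : ℕ) : Type := (Fin n → G) → k

/-- The `i`-th face of the bar construction. -/
def barFace {n : ℕ} (i : ℕ) (g : Fin (n + 1) → G) : Fin n → G := fun j =>
  if (j : ℕ) + 1 < i then g j.castSucc
  else if (j : ℕ) + 1 = i then g j.castSucc * g j.succ
  else g j.succ

/-- The simplicial coboundary `d^* = Σ (-1)^i d_i^*` computing `H^*(BG; k)`. -/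
noncomputable def dstarBar (k G : Type) [CommRing k] [Group G] (n : ℕ) :
    BarCochain k G n →ₗ[k] BarCochain k G (n + 1) :=
  ∑ i ∈ Finset.range (n + 2), ((-1 : k) ^ i) •
    LinearMap.pi fun g => LinearMap.proj (barFace i g)

/-- Degree-zero cohomology of a cochain complex. -/
noncomputable abbrev cohomZero {k V₀ V₁ : Type} [CommRing k] [AddCommGroup V₀] [Module k V₀]
    [AddCommGroup V₁] [Module k V₁] (d : V₀ →ₗ[k] V₁) : Type :=
  LinearMap.ker d

/-- Cohomology of a cochain complex at an intermediate spot `V₀ → V₁ → V₂`: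
`ker d₁ / im d₀`. -/
noncomputable abbrev cohomSucc {k V₀ V₁ V₂ : Type} [CommRing k] [AddCommGroup V₀] [Module k V₀]
    [AddCommGroup V₁] [Module k V₁] [AddCommGroup V₂] [Module k V₂]
    (d₀ : V₀ →ₗ[k] V₁) (d₁ : V₁ →ₗ[k] V₂) : Type :=
  LinearMap.ker d₁ ⧸
    Submodule.comap (LinearMap.ker d₁).subtype (LinearMap.range d₀)


section APAux

lemma gprod_cons {n : ℕ} (g : Fin (n + 1) → G) : gprod g = g 0 * gprod (Fin.tail g) := by
  rw [gprod, List.ofFn_succ, List.prod_cons]; rfl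

lemma gprod_fincons {n : ℕ} (a : G) (t : Fin n → G) :
    gprod (Fin.cons a t) = a * gprod t := by
  rw [gprod_cons]; simp

lemma gprod_init {n : ℕ} (g : Fin (n + 1) → G) :
    gprod g = gprod (Fin.init g) * g (Fin.last n) := by
  rw [gprod, List.ofFn_succ', List.concat_eq_append, List.prod_append, List.prod_cons,
    List.prod_nil, mul_one]; rfl

lemma gmerge_zero {n : ℕ} (g : Fin (n + 2) → G) :
    gmerge g 0 = Fin.cons (g 0 * g 1) (fun j => g j.succ.succ) := by
  funext j
  cases j using Fin.cases with
  | zero => simp [gmerge]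
  | succ j => simp [gmerge]

lemma gmerge_succ {n : ℕ} (g : Fin (n + 2) → G) (i : Fin n) :
    gmerge g i.succ = Fin.cons (g 0) (gmerge (Fin.tail g) i) := by
  funext j
  cases j using Fin.cases with
  | zero => simp [gmerge]
  | succ j =>
    simp only [gmerge, Fin.cons_succ, Fin.tail, Fin.val_succ, Fin.succ_castSucc]
    rcases lt_trichotomy (j : ℕ) (i : ℕ) with h | h | h
    · rw [if_pos (by omega), if_pos h]
    · rw [if_neg (by omega), if_pos (by omega), if_neg (by omega), if_pos h]
    · rw [if_neg (by omega), if_neg (by omega), if_neg (by omega), if_neg (by omega)]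

lemma gprod_gmerge {n : ℕ} (g : Fin (n + 1) → G) (i : Fin n) :
    gprod (gmerge g i) = gprod g := by
  induction n with
  | zero => exact i.elim0
  | succ m ih =>
    cases i using Fin.cases with
    | zero =>
      rw [gmerge_zero, gprod_fincons, gprod_cons g, gprod_cons (Fin.tail g), ← mul_assoc]
      rfl
    | succ i =>
      rw [gmerge_succ, gprod_fincons, ih, ← gprod_cons]

lemma barFace_zero {n : ℕ} (g : Fin (n + 1) → G) : barFace 0 g = Fin.tail g := by
  funext j; simp [barFace, Fin.tail]

lemma barFace_last {n : ℕ} (g : Fin (n + 1) → G) : barFace (n + 1) g = Fin.init g := by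
  funext j; simp only [barFace, Fin.init]; rw [if_pos (by omega)]

lemma barFace_succ {n : ℕ} (g : Fin (n + 1) → G) (i : Fin n) :
    barFace ((i : ℕ) + 1) g = gmerge g i := by
  funext j
  simp only [barFace, gmerge, Nat.add_lt_add_iff_right, Nat.add_right_cancel_iff]

/-- The canonical map from bar cochains to autopoietic Hochschild cochains. -/
noncomputable def PhiAP (n : ℕ) : BarCochain k G n →ₗ[k] GCochain k G n where
  toFun c := fun g => c g • single (gprod g) (1 : k)
  map_add' c c' := by funext g; simp [add_smul]
  map_smul' a c := by funext g; simp [mul_smul]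

lemma PhiAP_apply {n : ℕ} (c : BarCochain k G n) (g : Fin n → G) :
    PhiAP n c g = c g • single (gprod g) (1 : k) := rfl

/-- Extract the autopoietic coefficient. -/
noncomputable def PsiAP (n : ℕ) : GCochain k G n →ₗ[k] BarCochain k G n where
  toFun f := fun g => (f g).coeff (gprod g)
  map_add' f f' := by funext g; exact Finsupp.add_apply _ _ _
  map_smul' a f := by funext g; exact Finsupp.smul_apply _ _ _

lemma PhiAP_mem {n : ℕ} (c : BarCochain k G n) : PhiAP n c ∈ APsub k G n :=
  fun g => ⟨c g, rfl⟩

lemma PsiAP_PhiAP {n : ℕ} (c : BarCochain k G n) : PsiAP n (PhiAP n c) = c := by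
  funext g
  simp [PsiAP, PhiAP, Finsupp.single_eq_same]

lemma PhiAP_PsiAP {n : ℕ} (f : GCochain k G n) (hf : f ∈ APsub k G n) :
    PhiAP n (PsiAP n f) = f := by
  funext g
  obtain ⟨c, hc⟩ := hf g
  simp [PsiAP, PhiAP, hc, Finsupp.single_eq_same]

lemma gdelta_apply {n : ℕ} (f : GCochain k G n) (g : Fin (n + 1) → G) :
    gdelta k G n f g =
      single (g 0) (1 : k) * f (Fin.tail g)
      + ∑ i : Fin n, ((-1 : k) ^ ((i : ℕ) + 1)) • f (gmerge g i)
      + ((-1 : k) ^ (n + 1)) • (f (Fin.init g) * single (g (Fin.last n)) (1 : k)) := by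
  simp [gdelta]

lemma dstarBar_apply {n : ℕ} (c : BarCochain k G n) (g : Fin (n + 1) → G) :
    dstarBar k G n c g = ∑ i ∈ Finset.range (n + 2), ((-1 : k) ^ i) * c (barFace i g) := by
  simp [dstarBar]

/-- The key commutation relation. -/
lemma gdelta_PhiAP {n : ℕ} (c : BarCochain k G n) :
    gdelta k G n (PhiAP n c) = PhiAP (n + 1) (dstarBar k G n c) := by
  funext g
  rw [gdelta_apply]
  simp only [PhiAP_apply]
  rw [dstarBar_apply, Finset.sum_range_succ, Finset.sum_range_succ', add_smul, add_smul,
    Finset.sum_smul]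
  have hA : single (g 0) (1 : k) * (c (Fin.tail g) • single (gprod (Fin.tail g)) (1 : k))
      = ((-1 : k) ^ 0 * c (barFace 0 g)) • single (gprod g) (1 : k) := by
    rw [mul_smul_comm, MonoidAlgebra.single_mul_single, one_mul, ← gprod_cons, barFace_zero,
      pow_zero, one_mul]
  have hS : ∀ i : Fin n,
      ((-1 : k) ^ ((i : ℕ) + 1)) • (c (gmerge g i) • single (gprod (gmerge g i)) (1 : k))
      = ((-1 : k) ^ ((i : ℕ) + 1) * c (barFace ((i : ℕ) + 1) g)) • single (gprod g) (1 : k) := by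
    intro i
    rw [smul_smul, gprod_gmerge, barFace_succ]
  have hC : ((-1 : k) ^ (n + 1)) •
        (c (Fin.init g) • single (gprod (Fin.init g)) (1 : k) * single (g (Fin.last n)) (1 : k))
      = ((-1 : k) ^ (n + 1) * c (barFace (n + 1) g)) • single (gprod g) (1 : k) := by
    rw [smul_mul_assoc, MonoidAlgebra.single_mul_single, mul_one, ← gprod_init, barFace_last,
      smul_smul]
  rw [hA, hC, Finset.sum_congr rfl fun i _ => hS i, Fin.sum_univ_eq_sum_range
    (fun i => ((-1 : k) ^ (i + 1) * c (barFace (i + 1) g)) • single (gprod g) (1 : k))]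
  abel

lemma gdelta_mem {n : ℕ} (f : GCochain k G n) (hf : f ∈ APsub k G n) :
    gdelta k G n f ∈ APsub k G (n + 1) := by
  rw [← PhiAP_PsiAP f hf, gdelta_PhiAP]
  exact PhiAP_mem _

/-- The equivalence between bar cochains and autopoietic cochains. -/
noncomputable def eAP (n : ℕ) : BarCochain k G n ≃ₗ[k] APsub k G n :=
  LinearEquiv.ofLinear ((PhiAP n).codRestrict (APsub k G n) PhiAP_mem)
    ((PsiAP n).comp (APsub k G n).subtype)
    (LinearMap.ext fun f => Subtype.ext (PhiAP_PsiAP f.1 f.2))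
    (LinearMap.ext fun c => PsiAP_PhiAP c)

lemma eAP_comm (n : ℕ) (c : BarCochain k G n) :
    ((gdelta k G n).restrict (fun f hf => gdelta_mem f hf) (eAP n c) : GCochain k G (n + 1))
      = (eAP (n + 1) (dstarBar k G n c) : GCochain k G (n + 1)) := by
  show gdelta k G n (PhiAP n c) = PhiAP (n + 1) (dstarBar k G n c)
  exact gdelta_PhiAP c

section Transfer

variable {V₀ V₁ V₂ W₀ W₁ W₂ : Type} [AddCommGroup V₀] [Module k V₀]
  [AddCommGroup V₁] [Module k V₁] [AddCommGroup V₂] [Module k V₂]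
  [AddCommGroup W₀] [Module k W₀] [AddCommGroup W₁] [Module k W₁]
  [AddCommGroup W₂] [Module k W₂]

/-- Transfer of kernels along a commuting square of equivalences. -/
noncomputable def kerEquivAP (e₀ : V₀ ≃ₗ[k] W₀) (e₁ : V₁ ≃ₗ[k] W₁)
    (d : V₀ →ₗ[k] V₁) (d' : W₀ →ₗ[k] W₁) (hc : ∀ x, e₁ (d x) = d' (e₀ x)) :
    LinearMap.ker d ≃ₗ[k] LinearMap.ker d' where
  toFun x := ⟨e₀ x.1, by
    have : d x.1 = 0 := x.2
    rw [LinearMap.mem_ker, ← hc, this, map_zero]⟩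
  invFun y := ⟨e₀.symm y.1, by
    have h : d' y.1 = 0 := y.2
    have := hc (e₀.symm y.1)
    rw [e₀.apply_symm_apply, h] at this
    exact e₁.map_eq_zero_iff.mp this⟩
  left_inv x := by ext; simp
  right_inv y := by ext; simp
  map_add' x y := by ext; simp
  map_smul' a x := by ext; simp

/-- Transfer of two-step cohomology along commuting squares of equivalences. -/
noncomputable def cohomSuccEquivAP (e₀ : V₀ ≃ₗ[k] W₀) (e₁ : V₁ ≃ₗ[k] W₁) (e₂ : V₂ ≃ₗ[k] W₂)
    (d₀ : V₀ →ₗ[k] V₁) (d₁ : V₁ →ₗ[k] V₂) (d₀' : W₀ →ₗ[k] W₁) (d₁' : W₁ →ₗ[k] W₂)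
    (hc₀ : ∀ x, e₁ (d₀ x) = d₀' (e₀ x)) (hc₁ : ∀ x, e₂ (d₁ x) = d₁' (e₁ x)) :
    cohomSucc d₀ d₁ ≃ₗ[k] cohomSucc d₀' d₁' :=
  Submodule.Quotient.equiv _ _ (kerEquivAP e₁ e₂ d₁ d₁' hc₁) (by
    ext y
    simp only [Submodule.mem_map, Submodule.mem_comap, Submodule.subtype_apply,
      LinearMap.mem_range]
    constructor
    · rintro ⟨x, ⟨v, hv⟩, rfl⟩
      exact ⟨e₀ v, by rw [← hc₀, hv]; rfl⟩
    · rintro ⟨w, hw⟩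
      refine ⟨⟨e₁.symm y.1, ?_⟩, ⟨e₀.symm w, ?_⟩, ?_⟩
      · have h : d₁' y.1 = 0 := y.2
        have := hc₁ (e₁.symm y.1)
        rw [e₁.apply_symm_apply, h] at this
        exact e₂.map_eq_zero_iff.mp this
      · apply e₁.injective
        rw [hc₀, e₀.apply_symm_apply, hw, e₁.apply_symm_apply]
      · ext
        exact e₁.apply_symm_apply y.1)

end Transfer

end APAux

set_option synthInstance.maxHeartbeats 1000000 in
set_option maxHeartbeats 1000000 in
/-- The strictly autopoietic cochains form a subcomplex of the Hochschild
cochain complex `(Hom_k(k[G]^{⊗*}, k[G]), δ)`, and the cohomology of this subcomplex is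
isomorphic, as a `k`-module in each degree, to the group cohomology `H^*(BG; k)`, i.e. the
cohomology of the `Hom_k`-dual of the bar complex of `G`, for `G` finite or infinite. -/
theorem stmt_4 :
    ∃ h : ∀ (n : ℕ) (f : GCochain k G n), f ∈ APsub k G n → gdelta k G n f ∈ APsub k G (n + 1),
      Nonempty
        (cohomZero ((gdelta k G 0).restrict (fun f hf => h 0 f hf)
            : APsub k G 0 →ₗ[k] APsub k G 1) ≃ₗ[k]
          cohomZero (dstarBar k G 0)) ∧
      ∀ n : ℕ,
        Nonempty
          (cohomSucc
              ((gdelta k G n).restrict (fun f hf => h n f hf)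
                : APsub k G n →ₗ[k] APsub k G (n + 1))
              ((gdelta k G (n + 1)).restrict (fun f hf => h (n + 1) f hf)
                : APsub k G (n + 1) →ₗ[k] APsub k G (n + 2)) ≃ₗ[k]
            cohomSucc (dstarBar k G n) (dstarBar k G (n + 1))) := by
  refine ⟨fun n f hf => gdelta_mem f hf, ?_, ?_⟩
  · exact ⟨(kerEquivAP (eAP 0) (eAP 1) (dstarBar k G 0) _
      (fun c => Subtype.ext (eAP_comm 0 c).symm)).symm⟩
  · intro n
    exact ⟨(cohomSuccEquivAP (eAP n) (eAP (n + 1)) (eAP (n + 2))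
      (dstarBar k G n) (dstarBar k G (n + 1)) _ _
      (fun c => Subtype.ext (eAP_comm n c).symm)
      (fun c => Subtype.ext (eAP_comm (n + 1) c).symm)).symm⟩
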